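/- Let E ⊆ ℝ^{n+1} be open and bounded, let R > 0 and let r₀ ≥ R/2. Suppose x, y ∈ E satisfy dist(x, ∂E) > r₀ and dist(y, ∂E) > r₀, and set d = |x − y| with d ≤ min{R/4, 1}. Then every point on the line segment from x to y has distance greater than r₀ − d²/R from the complement of E; that is, the segment J_{xy} is contained in E_{r₀ − d²/R} = {z ∈ E : dist(z, ∂E) > r₀ − d²/R}. -/

import Mathlib

open Metric Set RealInnerProductSpace

set_option maxHeartbeats 1000000

private lemma seg_norm_sq {H : Type*} [NormedAddCommGroup H] [InnerProductSpace ℝ H]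
    (u v : H) (a b : ℝ) (hab : a + b = 1) :
    ‖a • u + b • v‖ ^ 2 = a * ‖u‖ ^ 2 + b * ‖v‖ ^ 2 - a * b * ‖u - v‖ ^ 2 := by
  have h1 := norm_add_sq_real (a • u) (b • v)
  have h2 := norm_sub_sq_real u v
  have h3 : (inner ℝ (a • u) (b • v) : ℝ) = a * b * (inner ℝ u v : ℝ) := by
    rw [real_inner_smul_left, real_inner_smul_right]; ring
  have h4 : ‖a • u‖ ^ 2 = a ^ 2 * ‖u‖ ^ 2 := by
    rw [norm_smul, mul_pow, Real.norm_eq_abs, sq_abs]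
  have h5 : ‖b • v‖ ^ 2 = b ^ 2 * ‖v‖ ^ 2 := by
    rw [norm_smul, mul_pow, Real.norm_eq_abs, sq_abs]
  have hb' : b = 1 - a := by linarith
  subst hb'
  rw [h1, h3, h4, h5, h2]
  ring

theorem stmt_3 (n : ℕ) (E : Set (EuclideanSpace ℝ (Fin (n+1))))
    (hEopen : IsOpen E) (hEbdd : Bornology.IsBounded E)
    (R r₀ d : ℝ) (hR : 0 < R) (hr₀ : R/2 ≤ r₀)
    (x y : EuclideanSpace ℝ (Fin (n+1))) (hx : x ∈ E) (hy : y ∈ E)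
    (hxd : r₀ < Metric.infDist x (frontier E))
    (hyd : r₀ < Metric.infDist y (frontier E))
    (hd : d = dist x y) (hdle : d ≤ min (R/4) 1) :
    segment ℝ x y ⊆ {z ∈ E | r₀ - d^2/R < Metric.infDist z (frontier E)} := by
  have hd0 : 0 ≤ d := hd ▸ dist_nonneg
  have hd4 : d ≤ R/4 := le_trans hdle (min_le_left _ _)
  have hd1 : d ≤ 1 := le_trans hdle (min_le_right _ _)
  have hr₀0 : 0 < r₀ := lt_of_lt_of_le (by linarith) hr₀
  set F := frontier E with hF
  -- F is nonempty
  have hFne : F.Nonempty := by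
    rw [hF, nonempty_frontier_iff]
    refine ⟨⟨x, hx⟩, fun hEuniv => ?_⟩
    obtain ⟨r, hr⟩ := (Metric.isBounded_iff_subset_closedBall 0).mp hEbdd
    have hp : (EuclideanSpace.single (0 : Fin (n+1)) (|r| + 1) : EuclideanSpace ℝ (Fin (n+1))) ∈ E := by
      rw [hEuniv]; trivial
    have := hr hp
    rw [Metric.mem_closedBall, dist_zero_right, EuclideanSpace.norm_single] at this
    have : |r| + 1 ≤ r := le_trans (le_abs_self _) this
    have := le_abs_self r
    linarith
  set r₁ := min (Metric.infDist x F) (Metric.infDist y F) with hr₁def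
  have hr₁ : r₀ < r₁ := lt_min hxd hyd
  -- key quantitative estimate for every point of the segment and every frontier point
  have key : ∀ a b : ℝ, 0 ≤ a → 0 ≤ b → a + b = 1 → ∀ w ∈ F,
      r₁ ^ 2 - d ^ 2 / 4 ≤ dist (a • x + b • y) w ^ 2 := by
    intro a b ha hb hab w hw
    have hxw : r₁ ≤ dist x w := le_trans (min_le_left _ _) (Metric.infDist_le_dist_of_mem hw)
    have hyw : r₁ ≤ dist y w := le_trans (min_le_right _ _) (Metric.infDist_le_dist_of_mem hw)
    have hzw : (a • x + b • y) - w = a • (x - w) + b • (y - w) := by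
      have : a • w + b • w = w := by rw [← add_smul, hab, one_smul]
      match_scalars <;> linarith
    have hid := seg_norm_sq (x - w) (y - w) a b hab
    have huv : (x - w) - (y - w) = x - y := by abel
    rw [huv] at hid
    have hdz : dist (a • x + b • y) w ^ 2
        = a * dist x w ^ 2 + b * dist y w ^ 2 - a * b * d ^ 2 := by
      rw [dist_eq_norm, hzw, hid, hd, dist_eq_norm, dist_eq_norm, dist_eq_norm]
    rw [hdz]
    have hab4 : a * b ≤ 1/4 := by nlinarith [sq_nonneg (a-b)]
    have hr₁0 : 0 ≤ r₁ := le_of_lt (lt_trans hr₀0 hr₁)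
    nlinarith [sq_nonneg d, mul_nonneg ha (sq_nonneg (dist x w)),
      mul_nonneg hb (sq_nonneg (dist y w)),
      mul_le_mul_of_nonneg_left (pow_le_pow_left₀ hr₁0 hxw 2) ha,
      mul_le_mul_of_nonneg_left (pow_le_pow_left₀ hr₁0 hyw 2) hb,
      mul_nonneg (mul_nonneg ha hb) (sq_nonneg d)]
  have hm0 : 0 < r₁ ^ 2 - d ^ 2 / 4 := by nlinarith
  -- segment is disjoint from the frontier
  have hsegF : ∀ p ∈ segment ℝ x y, p ∉ F := by
    rintro p ⟨a, b, ha, hb, hab, rfl⟩ hpF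
    have := key a b ha hb hab _ hpF
    rw [dist_self] at this
    nlinarith
  -- segment is contained in E
  have hsegE : segment ℝ x y ⊆ E := by
    intro p hp
    by_contra hpE
    have hpc : p ∈ (closure E)ᶜ := by
      intro hpcl
      exact hsegF p hp ⟨hpcl, fun h => hpE (hEopen.interior_eq ▸ h)⟩
    have hpre : IsPreconnected (segment ℝ x y) := (convex_segment x y).isPreconnected
    have hsub : segment ℝ x y ⊆ E ∪ (closure E)ᶜ := by
      intro q hq
      by_cases hqE : q ∈ E
      · exact Or.inl hqE
      · refine Or.inr fun hqcl => ?_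
        exact hsegF q hq ⟨hqcl, fun h => hqE (hEopen.interior_eq ▸ h)⟩
    have := hpre E (closure E)ᶜ hEopen isClosed_closure.isOpen_compl hsub
      ⟨x, left_mem_segment ℝ x y, hx⟩ ⟨p, hp, hpc⟩
    obtain ⟨q, _, hqE, hqc⟩ := this
    exact hqc (subset_closure hqE)
  intro z hz
  refine ⟨hsegE hz, ?_⟩
  obtain ⟨a, b, ha, hb, hab, rfl⟩ := hz
  set c := Real.sqrt (r₁ ^ 2 - d ^ 2 / 4) with hc
  have hcle : c ≤ Metric.infDist (a • x + b • y) F := by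
    by_contra hlt
    push_neg at hlt
    obtain ⟨w, hw, hdw⟩ := (Metric.infDist_lt_iff hFne).mp hlt
    have h1 := key a b ha hb hab w hw
    have h2 := Real.sqrt_le_sqrt h1
    rw [Real.sqrt_sq dist_nonneg] at h2
    rw [hc] at hdw
    linarith
  have hnn : 0 ≤ r₀ - d ^ 2 / R := by
    have : d ^ 2 / R ≤ R / 16 := by
      rw [div_le_iff₀ hR]; nlinarith
    linarith
  have hlt : r₀ - d ^ 2 / R < c := by
    rw [hc, Real.lt_sqrt hnn]
    have hdR : d ^ 2 / R ≤ d / 4 := by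
      rw [div_le_div_iff₀ hR (by norm_num)]; nlinarith
    have hdR0 : 0 ≤ d ^ 2 / R := div_nonneg (sq_nonneg d) (le_of_lt hR)
    have h2e : d ^ 2 ≤ 2 * r₀ * (d ^ 2 / R) := by
      have hRe : R * (d ^ 2 / R) = d ^ 2 := by field_simp
      nlinarith [hdR0]
    have he2 : (d ^ 2 / R) ^ 2 ≤ d ^ 2 / 16 := by nlinarith [hdR0, hdR, hd0, hd1]
    have hrr : r₀ ^ 2 < r₁ ^ 2 := by nlinarith
    nlinarith [h2e, he2, hrr, sq_nonneg d]
  linarith
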